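/- Assume the Paley graph conjecture: for every ε > 0 there exist p₀(ε) and δ(ε) > 0 such that for every prime p > p₀, all subsets A, B ⊆ F_p with |A|, |B| > p^ε, and every nontrivial multiplicative character χ of F_p, one has |Σ_{a∈A, b∈B} χ(a+b)| ≤ p^{−δ}|A||B|. Then for every k ≥ 2 and ε > 0 there is a constant C(ε) such that: for every prime p ≡ 1 (mod k), every λ ∈ F_p*, and all A, B ⊆ F_p with ab + λ ∈ S_k ∪ {0} for all a ∈ A, b ∈ B (where S_k = {x^k : x ∈ F_p*}), one has min(|A|, |B|) ≤ C(ε)·k·p^ε. -/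

import Mathlib

open Finset

set_option maxHeartbeats 1000000 in
/-- Assuming the Paley graph conjecture, for every `k ≥ 2` and `ε > 0` there is a
constant `C` such that for every prime `p ≡ 1 (mod k)`, every `λ ≠ 0` and all
`A, B ⊆ F_p` with `AB + λ ⊆ S_k ∪ {0}`, we have `min(|A|, |B|) ≤ C·k·p^ε`. -/
theorem stmt7
    (PGC : ∀ ε : ℝ, 0 < ε → ∃ p₀ : ℕ, ∃ δ : ℝ, 0 < δ ∧
      ∀ p : ℕ, p.Prime → p₀ < p →
        ∀ A B : Finset (ZMod p),
          (p : ℝ) ^ ε < (A.card : ℝ) → (p : ℝ) ^ ε < (B.card : ℝ) →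
          ∀ χ : MulChar (ZMod p) ℂ, χ ≠ 1 →
            ‖∑ a ∈ A, ∑ b ∈ B, χ (a + b)‖ ≤
              (p : ℝ) ^ (-δ) * (A.card : ℝ) * (B.card : ℝ)) :
    ∀ k : ℕ, 2 ≤ k → ∀ ε : ℝ, 0 < ε → ∃ C : ℝ, 0 < C ∧
      ∀ p : ℕ, p.Prime → p % k = 1 →
        ∀ lam : ZMod p, lam ≠ 0 →
          ∀ A B : Finset (ZMod p),
            (∀ a ∈ A, ∀ b ∈ B,
              a * b + lam = 0 ∨ ∃ x : ZMod p, x ≠ 0 ∧ a * b + lam = x ^ k) →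
            (min A.card B.card : ℝ) ≤ C * (k : ℝ) * (p : ℝ) ^ ε := by
  classical
  intro k hk ε hε
  obtain ⟨p₀, δ, hδ, hPGC⟩ := PGC ε hε
  set P : ℕ := max p₀ ⌈(2:ℝ) ^ (1/δ)⌉₊ with hPdef
  refine ⟨(P : ℝ) + 3, by positivity, ?_⟩
  intro p hp hpk lam hlam A B hAB
  haveI : Fact p.Prime := ⟨hp⟩
  -- p > k
  have hkp : k < p := by
    rcases lt_or_ge p k with h | h
    · have : p % k = p := Nat.mod_eq_of_lt h
      have : p = 1 := by omega
      exact absurd this hp.one_lt.ne'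
    · rcases eq_or_lt_of_le h with h' | h'
      · exfalso; rw [← h', Nat.mod_self] at hpk; omega
      · exact h'
  have hp3 : 3 ≤ p := by omega
  have hpε1 : (1:ℝ) ≤ (p:ℝ) ^ ε :=
    Real.one_le_rpow (by exact_mod_cast Nat.one_le_iff_ne_zero.mpr (by omega)) hε.le
  have hk1 : (1:ℝ) ≤ (k:ℝ) := by exact_mod_cast (by omega : 1 ≤ k)
  have hk2 : (2:ℝ) ≤ (k:ℝ) := by exact_mod_cast hk
  by_cases hpP : p ≤ P
  · -- small p : min ≤ p ≤ P
    have h1 : min ((A.card : ℝ)) ((B.card : ℝ)) ≤ (p : ℝ) := by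
      refine le_trans (min_le_left _ _) ?_
      exact_mod_cast (by simpa [ZMod.card] using Finset.card_le_univ A : A.card ≤ p)
    have h2 : (p : ℝ) ≤ (P : ℝ) := by exact_mod_cast hpP
    have h3 : (1:ℝ) ≤ (k:ℝ) * (p:ℝ) ^ ε := by nlinarith
    have hP0' : (0:ℝ) ≤ (P:ℝ) + 3 := by positivity
    calc min ((A.card : ℝ)) ((B.card : ℝ)) ≤ (P : ℝ) + 3 := by linarith
      _ = ((P : ℝ) + 3) * 1 := (mul_one _).symm
      _ ≤ ((P : ℝ) + 3) * ((k : ℝ) * (p:ℝ) ^ ε) := mul_le_mul_of_nonneg_left h3 hP0'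
      _ = ((P : ℝ) + 3) * (k : ℝ) * (p:ℝ) ^ ε := by ring
  push_neg at hpP
  by_contra hbig
  push_neg at hbig
  have hP0 : (0:ℝ) ≤ (P:ℝ) := by positivity
  have hA : ((P : ℝ) + 3) * (k : ℝ) * (p:ℝ) ^ ε < (A.card : ℝ) :=
    hbig.trans_le (min_le_left _ _)
  have hB : ((P : ℝ) + 3) * (k : ℝ) * (p:ℝ) ^ ε < (B.card : ℝ) :=
    hbig.trans_le (min_le_right _ _)
  have hA3 : 3 * (k:ℝ) * (p:ℝ) ^ ε < (A.card : ℝ) := by nlinarith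
  have hB3 : 3 * (k:ℝ) * (p:ℝ) ^ ε < (B.card : ℝ) := by nlinarith
  have hBε : (p:ℝ) ^ ε < (B.card : ℝ) := by nlinarith
  have hB6 : (6:ℝ) < (B.card : ℝ) := by nlinarith
  -- character of order k
  have hdvd : k ∣ Fintype.card (ZMod p) - 1 := by
    rw [ZMod.card]
    exact ⟨p / k, by have h := Nat.div_add_mod p k; omega⟩
  have hζ : IsPrimitiveRoot (Complex.exp (2 * Real.pi * Complex.I / k)) k :=
    Complex.isPrimitiveRoot_exp k (by omega)
  obtain ⟨χ, hχord⟩ := MulChar.exists_mulChar_orderOf (ZMod p) hdvd hζ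
  have hχ1 : χ ≠ 1 := by
    intro h; rw [h, orderOf_one] at hχord; omega
  have hχk : χ ^ k = 1 := by rw [← hχord]; exact pow_orderOf_eq_one χ
  have hχpow : ∀ x : ZMod p, x ≠ 0 → (χ x) ^ k = 1 := by
    intro x hx
    have hux : IsUnit x := Ne.isUnit hx
    rw [← MulChar.pow_apply' χ (by omega) x, hχk, MulChar.one_apply hux]
  -- pigeonhole
  set A₀ : Finset (ZMod p) := A.erase 0 with hA₀def
  set t : Finset ℂ := A₀.image χ with htdef
  have htk : t.card ≤ k := by
    have hsub : t ⊆ (Polynomial.nthRoots k (1:ℂ)).toFinset := by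
      intro z hz
      rw [htdef, Finset.mem_image] at hz
      obtain ⟨a, ha, rfl⟩ := hz
      rw [Multiset.mem_toFinset, Polynomial.mem_nthRoots (by omega : 0 < k)]
      exact hχpow a (Finset.ne_of_mem_erase ha)
    calc t.card ≤ _ := Finset.card_le_card hsub
      _ ≤ Multiset.card (Polynomial.nthRoots k (1:ℂ)) := Multiset.toFinset_card_le _
      _ ≤ k := Polynomial.card_nthRoots k 1
  set n : ℕ := ⌊(p:ℝ) ^ ε⌋₊ with hndef
  have hnle : (n : ℝ) ≤ (p:ℝ) ^ ε := Nat.floor_le (by positivity)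
  have hcount : t.card * n < A₀.card := by
    have h1 : ((k * n : ℕ) : ℝ) + 2 ≤ (A.card : ℝ) := by
      push_cast
      nlinarith
    have h2 : k * n + 2 ≤ A.card := by exact_mod_cast h1
    have h3 : A.card - 1 ≤ A₀.card := by
      rw [hA₀def]
      exact Finset.pred_card_le_card_erase
    have h4 : t.card * n ≤ k * n := Nat.mul_le_mul_right n htk
    omega
  obtain ⟨ω, hωt, hωfib⟩ := Finset.exists_lt_card_fiber_of_mul_lt_card_of_maps_to
    (fun a ha => Finset.mem_image_of_mem χ ha) hcount
  set Aω : Finset (ZMod p) := A₀.filter (fun a => χ a = ω) with hAωdef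
  have hAωε : (p:ℝ) ^ ε < (Aω.card : ℝ) := by
    have h1 : (p:ℝ) ^ ε < (n:ℝ) + 1 := Nat.lt_floor_add_one _
    have h2 : (n:ℝ) + 1 ≤ (Aω.card : ℝ) := by exact_mod_cast hωfib
    linarith
  have hAωsub : ∀ a ∈ Aω, a ≠ 0 ∧ a ∈ A ∧ χ a = ω := by
    intro a ha
    rw [hAωdef, Finset.mem_filter] at ha
    exact ⟨Finset.ne_of_mem_erase ha.1, Finset.mem_of_mem_erase ha.1, ha.2⟩
  -- ω is a k-th root of unity
  obtain ⟨a₀, ha₀, ha₀ω⟩ := Finset.mem_image.mp hωt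
  have hωk : ω ^ k = 1 := ha₀ω ▸ hχpow a₀ (Finset.ne_of_mem_erase ha₀)
  have hωabs : ‖ω‖ = 1 := Complex.norm_eq_one_of_pow_eq_one hωk (by omega)
  have hω0 : ω ≠ 0 := by
    intro h; rw [h] at hωabs; simp at hωabs
  -- the shifted set
  set A' : Finset (ZMod p) := Aω.image (fun a => lam * a⁻¹) with hA'def
  have hinj : Set.InjOn (fun a => lam * a⁻¹) Aω := by
    intro a ha b hb hab
    have ha0 := (hAωsub a ha).1
    have hb0 := (hAωsub b hb).1
    have : (a : ZMod p)⁻¹ = b⁻¹ := mul_left_cancel₀ hlam hab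
    rwa [inv_inj] at this
  have hA'card : A'.card = Aω.card := Finset.card_image_of_injOn hinj
  -- key term identity
  have hterm : ∀ a ∈ Aω, ∀ b ∈ B,
      χ (lam * a⁻¹ + b) = ω⁻¹ * (if a * b + lam = 0 then 0 else 1) := by
    intro a ha b hb
    obtain ⟨ha0, haA, haω⟩ := hAωsub a ha
    have hrw : lam * a⁻¹ + b = a⁻¹ * (a * b + lam) := by
      field_simp; ring
    have hχinv : χ a⁻¹ = ω⁻¹ := by
      have h1 : χ a⁻¹ * χ a = 1 := by
        rw [← map_mul, inv_mul_cancel₀ ha0, map_one]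
      rw [haω] at h1
      field_simp at h1 ⊢
      linear_combination h1
    rw [hrw, map_mul, hχinv]
    rcases hAB a haA b hb with h0 | ⟨x, hx0, hxk⟩
    · rw [h0, if_pos rfl, MulChar.map_nonunit χ (by simp)]
    · have hne : a * b + lam ≠ 0 := by
        rw [hxk]; exact pow_ne_zero k hx0
      rw [if_neg hne, hxk, map_pow, hχpow x hx0]
  -- the double sum equals ω⁻¹ times a count
  set N : ℕ := ∑ a ∈ Aω, (B.filter (fun b => a * b + lam ≠ 0)).card with hNdef
  have hsum : (∑ a ∈ A', ∑ b ∈ B, χ (a + b)) = ω⁻¹ * (N : ℂ) := by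
    rw [hA'def, Finset.sum_image hinj, hNdef]
    push_cast
    rw [Finset.mul_sum]
    refine Finset.sum_congr rfl fun a ha => ?_
    calc ∑ b ∈ B, χ (lam * a⁻¹ + b)
        = ∑ b ∈ B, ω⁻¹ * (if a * b + lam = 0 then 0 else 1) :=
          Finset.sum_congr rfl fun b hb => hterm a ha b hb
      _ = ω⁻¹ * ∑ b ∈ B, (if a * b + lam = 0 then (0:ℂ) else 1) := by
          rw [Finset.mul_sum]
      _ = ω⁻¹ * ((B.filter (fun b => a * b + lam ≠ 0)).card : ℂ) := by
          congr 1
          have h : ∀ b : ZMod p, (if a * b + lam = 0 then (0:ℂ) else 1) =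
              (if a * b + lam ≠ 0 then (1:ℂ) else 0) := by
            intro b; by_cases h : a * b + lam = 0 <;> simp [h]
          simp_rw [h]
          rw [Finset.sum_boole]
  -- |sum| = N
  have habsS : ‖∑ a ∈ A', ∑ b ∈ B, χ (a + b)‖ = (N : ℝ) := by
    rw [hsum, norm_mul, norm_inv, hωabs, Complex.norm_natCast]
    norm_num
  -- lower bound on N
  have hfib : ∀ a ∈ Aω, B.card - 1 ≤ (B.filter (fun b => a * b + lam ≠ 0)).card := by
    intro a ha
    obtain ⟨ha0, -, -⟩ := hAωsub a ha
    have hsub : B.filter (fun b => ¬ (a * b + lam ≠ 0)) ⊆ {a⁻¹ * (-lam)} := by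
      intro b hb
      rw [Finset.mem_filter, not_not] at hb
      rw [Finset.mem_singleton]
      have h1 : a * b = -lam := by linear_combination hb.2
      rw [← h1, ← mul_assoc, inv_mul_cancel₀ ha0, one_mul]
    have h1 : (B.filter (fun b => ¬ (a * b + lam ≠ 0))).card ≤ 1 :=
      (Finset.card_le_card hsub).trans (by simp)
    have h2 := Finset.card_filter_add_card_filter_not
      (s := B) (p := fun b => a * b + lam ≠ 0)
    omega
  have hNlow : (Aω.card : ℝ) * ((B.card : ℝ) - 1) ≤ (N : ℝ) := by
    have h1 : Aω.card * (B.card - 1) ≤ N := by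
      rw [hNdef]
      simpa [smul_eq_mul] using Finset.card_nsmul_le_sum Aω (fun a => (B.filter (fun b => a * b + lam ≠ 0)).card) (B.card - 1) hfib
    have h2 : (1:ℝ) ≤ (B.card : ℝ) := by linarith
    calc (Aω.card : ℝ) * ((B.card : ℝ) - 1) = ((Aω.card * (B.card - 1) : ℕ) : ℝ) := by
          push_cast [Nat.cast_sub (by exact_mod_cast h2 : 1 ≤ B.card)]
          ring
      _ ≤ (N : ℝ) := by exact_mod_cast h1
  -- apply PGC
  have hA'ε : (p:ℝ) ^ ε < (A'.card : ℝ) := by rw [hA'card]; exact hAωε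
  have hp₀ : p₀ < p := lt_of_le_of_lt (le_max_left _ _) hpP
  have hup := hPGC p hp hp₀ A' B hA'ε hBε χ hχ1
  rw [habsS, hA'card] at hup
  -- p^(-δ) < 1/2
  have hpδ : (p:ℝ) ^ (-δ) < 1/2 := by
    have h2p : (2:ℝ) ^ (1/δ) < (p:ℝ) := by
      calc (2:ℝ) ^ (1/δ) ≤ (⌈(2:ℝ) ^ (1/δ)⌉₊ : ℝ) := Nat.le_ceil _
        _ ≤ (P : ℝ) := by exact_mod_cast le_max_right p₀ _
        _ < (p : ℝ) := by exact_mod_cast hpP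
    have h2 : (2:ℝ) < (p:ℝ) ^ δ := by
      calc (2:ℝ) = ((2:ℝ) ^ (1/δ)) ^ δ := by
            rw [← Real.rpow_mul (by norm_num), one_div_mul_cancel hδ.ne', Real.rpow_one]
        _ < (p:ℝ) ^ δ := Real.rpow_lt_rpow (by positivity) h2p hδ
    have hpos : (0:ℝ) < (p:ℝ) ^ δ := by positivity
    rw [Real.rpow_neg (by positivity)]
    rw [inv_lt_iff_one_lt_mul₀ hpos]
    linarith
  -- contradiction
  have hAω0 : (0:ℝ) < (Aω.card : ℝ) := by linarith
  have hB0 : (0:ℝ) < (B.card : ℝ) := by linarith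
  have hkey : (p:ℝ) ^ (-δ) * (Aω.card : ℝ) * (B.card : ℝ) <
      (1/2) * ((Aω.card : ℝ) * (B.card : ℝ)) := by
    have h := mul_lt_mul_of_pos_right hpδ (mul_pos hAω0 hB0)
    nlinarith [h]
  have h6 : (Aω.card : ℝ) * 6 < (Aω.card : ℝ) * (B.card : ℝ) :=
    mul_lt_mul_of_pos_left hB6 hAω0
  nlinarith [hNlow, hup, hkey, h6, hAω0]
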